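/- arXiv:1307.8404 — 4 statements merged into one kernel-verified Lean document; each statement's English description precedes it below -/
import Mathlib

section
/- Let L be a finite lattice, let a ≤ b in L, and let q = [c, d] be a prime interval of L (c ⋖ d) such that c and d are congruent modulo con(a, b). Then there exists a prime interval p = [e, f] contained in [a, b] (that is, a ≤ e ⋖ f ≤ b) such that [e, f] is congruence-projective onto [c, d]. -/
/-- A lattice congruence: an equivalence relation compatible with `⊔` and `⊓`. -/
def IsLatCon {α : Type*} [Lattice α] (r : α → α → Prop) : Prop :=
  Equivalence r ∧
    ∀ a b c d : α, r a b → r c d → r (a ⊔ c) (b ⊔ d) ∧ r (a ⊓ c) (b ⊓ d)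

/-- `latConGen a b` is the smallest lattice congruence relating `a` and `b`
(the intersection of all lattice congruences relating `a` and `b`). -/
def latConGen {α : Type*} [Lattice α] (a b : α) : α → α → Prop :=
  fun x y => ∀ r : α → α → Prop, IsLatCon r → r a b → r x y

/-- An interval `(a, b)` (representing `[a, b]`) is up congruence-perspective
to `(c, d)`. -/
def CPerspUp {α : Type*} [Lattice α] (I J : α × α) : Prop :=
  I.1 ≤ J.1 ∧ J.2 = I.2 ⊔ J.1

/-- An interval `(a, b)` is down congruence-perspective to `(c, d)`. -/
def CPerspDn {α : Type*} [Lattice α] (I J : α × α) : Prop :=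
  J.2 ≤ I.2 ∧ J.1 = I.1 ⊓ J.2

/-- Congruence-perspectivity. -/
def CPersp {α : Type*} [Lattice α] (I J : α × α) : Prop :=
  CPerspUp I J ∨ CPerspDn I J

/-- Congruence-projectivity: a finite chain of congruence-perspectivities. -/
def CProj {α : Type*} [Lattice α] : α × α → α × α → Prop :=
  Relation.ReflTransGen CPersp

section Aux

variable {α : Type*} [Lattice α]

/-- One step of the chain relation used to generate `con(a,b)`. -/
def LStep (a b : α) (u v : α) : Prop := u ≤ v ∧ CProj (a, b) (u, v)

/-- Chains of steps. -/
def LRel (a b : α) : α → α → Prop := Relation.ReflTransGen (LStep a b)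

/-- The candidate congruence. -/
def ThRel (a b : α) (x y : α) : Prop := LRel a b (x ⊓ y) (x ⊔ y)

lemma cproj_sup {I : α × α} {u v : α} (huv : u ≤ v) (h : CProj I (u, v)) (z : α) :
    CProj I (u ⊔ z, v ⊔ z) :=
  h.tail (Or.inl ⟨le_sup_left, by rw [← sup_assoc, sup_eq_left.2 huv]⟩)

lemma cproj_inf {I : α × α} {u v : α} (huv : u ≤ v) (h : CProj I (u, v)) (z : α) :
    CProj I (u ⊓ z, v ⊓ z) :=
  h.tail (Or.inr ⟨inf_le_left, by rw [← inf_assoc, inf_eq_left.2 huv]⟩)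

lemma lrel_le {a b x y : α} (h : LRel a b x y) : x ≤ y := by
  induction h with
  | refl => exact le_rfl
  | tail _ hstep ih => exact ih.trans hstep.1

lemma lrel_sup {a b x y : α} (z : α) (h : LRel a b x y) : LRel a b (x ⊔ z) (y ⊔ z) :=
  Relation.ReflTransGen.lift (fun u => u ⊔ z)
    (fun u v (hs : LStep a b u v) =>
      (⟨sup_le_sup_right hs.1 z, cproj_sup hs.1 hs.2 z⟩ : LStep a b (u ⊔ z) (v ⊔ z))) _ _ h

lemma lrel_inf {a b x y : α} (z : α) (h : LRel a b x y) : LRel a b (x ⊓ z) (y ⊓ z) :=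
  Relation.ReflTransGen.lift (fun u => u ⊓ z)
    (fun u v (hs : LStep a b u v) =>
      (⟨inf_le_inf_right z hs.1, cproj_inf hs.1 hs.2 z⟩ : LStep a b (u ⊓ z) (v ⊓ z))) _ _ h

lemma lrel_shrink {a b x y u v : α} (h : LRel a b x y) (hxu : x ≤ u) (huv : u ≤ v)
    (hvy : v ≤ y) : LRel a b u v := by
  have h1 := lrel_sup u h
  rw [sup_eq_right.2 hxu, sup_eq_left.2 (huv.trans hvy)] at h1
  have h2 := lrel_inf v h1
  rwa [inf_eq_left.2 huv, inf_eq_right.2 hvy] at h2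

lemma thRel_isLatCon (a b : α) : IsLatCon (ThRel a b) := by
  have hjoin : ∀ x y c d : α, ThRel a b x y → ThRel a b c d →
      ThRel a b (x ⊔ c) (y ⊔ d) := by
    intro x y c d h1 h2
    have s1 := lrel_sup (c ⊓ d) h1
    have s2 := lrel_sup (x ⊔ y) h2
    rw [sup_comm (c ⊓ d) (x ⊔ y), sup_comm (c ⊔ d) (x ⊔ y)] at s2
    have s3 : LRel a b ((x ⊓ y) ⊔ (c ⊓ d)) ((x ⊔ y) ⊔ (c ⊔ d)) := s1.trans s2
    exact lrel_shrink s3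
      (le_inf (sup_le_sup inf_le_left inf_le_left)
        (sup_le_sup inf_le_right inf_le_right))
      inf_le_sup
      (sup_le (sup_le_sup le_sup_left le_sup_left)
        (sup_le_sup le_sup_right le_sup_right))
  have hmeet : ∀ x y c d : α, ThRel a b x y → ThRel a b c d →
      ThRel a b (x ⊓ c) (y ⊓ d) := by
    intro x y c d h1 h2
    have s1 := lrel_inf (c ⊔ d) h1
    have s2 := lrel_inf (x ⊓ y) h2
    rw [inf_comm (c ⊓ d) (x ⊓ y), inf_comm (c ⊔ d) (x ⊓ y)] at s2
    have s3 : LRel a b ((x ⊓ y) ⊓ (c ⊓ d)) ((x ⊔ y) ⊓ (c ⊔ d)) := s2.trans s1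
    exact lrel_shrink s3
      (le_inf (inf_le_inf inf_le_left inf_le_left)
        (inf_le_inf inf_le_right inf_le_right))
      inf_le_sup
      (sup_le (inf_le_inf le_sup_left le_sup_left)
        (inf_le_inf le_sup_right le_sup_right))
  refine ⟨⟨fun x => ?_, fun {x y} h => ?_, fun {x y z} h1 h2 => ?_⟩,
    fun x y c d h1 h2 => ⟨hjoin x y c d h1 h2, hmeet x y c d h1 h2⟩⟩
  · show LRel a b (x ⊓ x) (x ⊔ x)
    rw [inf_idem, sup_idem]
    exact Relation.ReflTransGen.refl
  · show LRel a b (y ⊓ x) (y ⊔ x)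
    rwa [inf_comm, sup_comm]
  · show LRel a b (x ⊓ z) (x ⊔ z)
    have s1 := lrel_inf (x ⊓ y) h2
    rw [inf_eq_right.2 (inf_le_right.trans le_sup_left : x ⊓ y ≤ y ⊔ z)] at s1
    have s2 := lrel_sup (x ⊔ y) h2
    rw [sup_eq_right.2 (inf_le_left.trans le_sup_right : y ⊓ z ≤ x ⊔ y)] at s2
    have s3 : LRel a b ((y ⊓ z) ⊓ (x ⊓ y)) ((y ⊔ z) ⊔ (x ⊔ y)) :=
      (s1.trans h1).trans s2
    exact lrel_shrink s3
      (le_inf (inf_le_right.trans inf_le_left) (inf_le_left.trans inf_le_right))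
      inf_le_sup
      (sup_le (le_sup_left.trans le_sup_right) (le_sup_right.trans le_sup_left))

lemma lrel_prime {a b c d : α} (h : LRel a b c d) (hcd : c ⋖ d) : CProj (a, b) (c, d) := by
  have aux : ∀ y, LRel a b c y → y ≤ d → y = c ∨ CProj (a, b) (c, d) := by
    intro y hy
    induction hy with
    | refl => exact fun _ => Or.inl rfl
    | @tail w y' h1 h2 ih =>
      intro hyd
      rcases ih (h2.1.trans hyd) with rfl | hc
      · rcases hcd.eq_or_eq h2.1 hyd with h' | h'
        · exact Or.inl h'
        · exact Or.inr (h' ▸ h2.2)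
      · exact Or.inr hc
  rcases aux d h le_rfl with heq | hc
  · exact absurd heq hcd.lt.ne'
  · exact hc

variable [Fintype α]

/-- Pull a prime interval back through a single congruence-perspectivity. -/
lemma prime_pullback {s t s₁ t₁ p q : α} (hst : s ≤ t)
    (hp : CPersp (s, t) (s₁, t₁)) (h1 : s₁ ≤ p) (hpq : p ⋖ q) (h2 : q ≤ t₁) :
    ∃ e f, s ≤ e ∧ e ⋖ f ∧ f ≤ t ∧ CProj (e, f) (p, q) := by
  classical
  rcases hp with ⟨hss₁', ht₁'⟩ | ⟨ht₁t', hs₁'⟩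
  · -- up case: s ≤ s₁, t₁ = t ⊔ s₁
    have hss₁ : s ≤ s₁ := hss₁'
    have ht₁ : t₁ = t ⊔ s₁ := ht₁'
    have hsp : s ≤ p := hss₁.trans h1
    have hqtp : q ≤ t ⊔ p := by
      rw [ht₁] at h2; exact h2.trans (sup_le_sup_left h1 t)
    set X : Finset α := Finset.univ.filter (fun x => s ≤ x ∧ x ≤ t ∧ q ≤ x ⊔ p) with hX
    have htX : t ∈ X := by simp [hX, hst, hqtp]
    obtain ⟨x, hxX, hmin⟩ := X.exists_minimal ⟨t, htX⟩
    simp only [hX, Finset.mem_filter, Finset.mem_univ, true_and] at hxX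
    obtain ⟨hsx, hxt, hqxp⟩ := hxX
    have hsltx : s < x := by
      rcases hsx.lt_or_eq with h' | h'
      · exact h'
      · exfalso
        rw [← h', sup_eq_right.2 hsp] at hqxp
        exact hpq.lt.not_ge hqxp
    set Y : Finset α := Finset.univ.filter (fun y => s ≤ y ∧ y < x) with hY
    have hsY : s ∈ Y := by simp [hY, hsltx]
    obtain ⟨y, hyY, hmax⟩ := Y.exists_maximal ⟨s, hsY⟩
    simp only [hY, Finset.mem_filter, Finset.mem_univ, true_and] at hyY
    obtain ⟨hsy, hyx⟩ := hyY
    have hcov : y ⋖ x := by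
      refine ⟨hyx, fun z hz1 hz2 => ?_⟩
      exact lt_irrefl _ (hz1.trans_le (hmax (by simp [hY, hsy.trans hz1.le, hz2]) hz1.le))
    have hnq : ¬ q ≤ y ⊔ p := by
      intro hq
      exact lt_irrefl _ (hyx.trans_le (hmin (by simp [hX, hsy, hyx.le.trans hxt, hq]) hyx.le))
    have step1 : CPerspUp ((y, x) : α × α) (y ⊔ p, x ⊔ p) :=
      ⟨le_sup_left, by rw [← sup_assoc, sup_eq_left.2 hyx.le]⟩
    have step2 : CPerspDn ((y ⊔ p, x ⊔ p) : α × α) (p, q) := by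
      refine ⟨hqxp, ?_⟩
      have hle : p ≤ (y ⊔ p) ⊓ q := le_inf le_sup_right hpq.le
      rcases hpq.eq_or_eq hle inf_le_right with h' | h'
      · exact h'.symm
      · exact absurd (h' ▸ inf_le_left : q ≤ y ⊔ p) hnq
    have hchain : CProj ((y, x) : α × α) (p, q) :=
      Relation.ReflTransGen.tail
        (Relation.ReflTransGen.single (Or.inl step1)) (Or.inr step2)
    exact ⟨y, x, hsy, hcov, hxt, hchain⟩
  · -- down case: t₁ ≤ t, s₁ = s ⊓ t₁
    have ht₁t : t₁ ≤ t := ht₁t'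
    have hs₁ : s₁ = s ⊓ t₁ := hs₁'
    have hqt : q ≤ t := h2.trans ht₁t
    have hsqp : s ⊓ q ≤ p := (inf_le_inf_left s h2).trans (hs₁ ▸ h1)
    set X : Finset α := Finset.univ.filter (fun x => s ≤ x ∧ x ≤ t ∧ x ⊓ q ≤ p) with hX
    have hsX : s ∈ X := by simp [hX, hst, hsqp]
    obtain ⟨x, hxX, hmax⟩ := X.exists_maximal ⟨s, hsX⟩
    simp only [hX, Finset.mem_filter, Finset.mem_univ, true_and] at hxX
    obtain ⟨hsx, hxt, hxqp⟩ := hxX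
    have hxltt : x < t := by
      rcases hxt.lt_or_eq with h' | h'
      · exact h'
      · exfalso
        rw [h', inf_eq_right.2 hqt] at hxqp
        exact hpq.lt.not_ge hxqp
    set Y : Finset α := Finset.univ.filter (fun y => x < y ∧ y ≤ t) with hY
    have htY : t ∈ Y := by simp [hY, hxltt]
    obtain ⟨y, hyY, hmin⟩ := Y.exists_minimal ⟨t, htY⟩
    simp only [hY, Finset.mem_filter, Finset.mem_univ, true_and] at hyY
    obtain ⟨hxy, hyt⟩ := hyY
    have hcov : x ⋖ y := by
      refine ⟨hxy, fun z hz1 hz2 => ?_⟩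
      exact lt_irrefl _ (hz2.trans_le (hmin (by simp [hY, hz1, hz2.le.trans hyt]) hz2.le))
    have hnq : ¬ y ⊓ q ≤ p := by
      intro hq
      exact lt_irrefl _ (hxy.trans_le (hmax (by simp [hX, hsx.trans hxy.le, hyt, hq]) hxy.le))
    have step1 : CPerspDn ((x, y) : α × α) (x ⊓ q, y ⊓ q) :=
      ⟨inf_le_left, by rw [← inf_assoc, inf_eq_left.2 hxy.le]⟩
    have step2 : CPerspUp ((x ⊓ q, y ⊓ q) : α × α) (p, q) := by
      refine ⟨hxqp, ?_⟩
      have hle2 : (y ⊓ q) ⊔ p ≤ q := sup_le inf_le_right hpq.le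
      rcases hpq.eq_or_eq le_sup_right hle2 with h' | h'
      · exact absurd (le_sup_left.trans h'.le : y ⊓ q ≤ p) hnq
      · exact h'.symm
    have hchain : CProj ((x, y) : α × α) (p, q) :=
      Relation.ReflTransGen.tail
        (Relation.ReflTransGen.single (Or.inr step1)) (Or.inl step2)
    exact ⟨x, y, hsx, hcov, hyt, hchain⟩

/-- Pull a prime interval back through a chain of congruence-perspectivities. -/
lemma cproj_prime_pullback {p q : α} (hpq : p ⋖ q) :
    ∀ {I : α × α}, CProj I (p, q) → I.1 ≤ I.2 →
      ∃ e f, I.1 ≤ e ∧ e ⋖ f ∧ f ≤ I.2 ∧ CProj (e, f) (p, q) := by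
  intro I h
  induction h using Relation.ReflTransGen.head_induction_on with
  | refl => exact fun _ => ⟨p, q, le_rfl, hpq, le_rfl, Relation.ReflTransGen.refl⟩
  | head h' hrest ih =>
    rename_i I' J
    intro hI
    have hJ : J.1 ≤ J.2 := by
      rcases h' with ⟨_, heq⟩ | ⟨_, heq⟩
      · exact heq ▸ le_sup_right
      · exact heq ▸ inf_le_right
    obtain ⟨e', f', he', hef', hf', hcp⟩ := ih hJ
    obtain ⟨e, f, he, hef, hf, hcp'⟩ :=
      prime_pullback (s := I'.1) (t := I'.2) (s₁ := J.1) (t₁ := J.2) hI h' he' hef' hf'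
    exact ⟨e, f, he, hef, hf, hcp'.trans hcp⟩

end Aux

/-- If `a ≤ b` and `[c, d]` is a prime interval collapsed by `con(a, b)`, then
there is a prime interval `[e, f]` inside `[a, b]` congruence-projective onto
`[c, d]`. -/
theorem exists_prime_cproj {α : Type*} [Lattice α] [Fintype α]
    (a b c d : α) (hab : a ≤ b) (hcd : c ⋖ d)
    (h : latConGen a b c d) :
    ∃ e f : α, a ≤ e ∧ e ⋖ f ∧ f ≤ b ∧ CProj (e, f) (c, d) := by
  have hTab : ThRel a b a b := by
    show LRel a b (a ⊓ b) (a ⊔ b)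
    rw [inf_eq_left.2 hab, sup_eq_right.2 hab]
    exact Relation.ReflTransGen.single ⟨hab, Relation.ReflTransGen.refl⟩
  have hc : ThRel a b c d := h _ (thRel_isLatCon a b) hTab
  have hR : LRel a b c d := by
    have := hc
    unfold ThRel at this
    rwa [inf_eq_left.2 hcd.le, sup_eq_right.2 hcd.le] at this
  have hcp : CProj (a, b) (c, d) := lrel_prime hR hcd
  exact cproj_prime_pullback hcd hcp hab
end

section
/- Let L be a finite lattice and let a ⋖ b in L (so [a, b] is a prime interval). Then con(a, b) is a join-irreducible element of the lattice of all lattice congruences of L: con(a, b) is not the trivial (diagonal) congruence, and whenever con(a, b) equals the join θ₁ ⊔ θ₂ of two congruences θ₁, θ₂ of L, it equals θ₁ or θ₂. -/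
/-- The join of two lattice congruences in the lattice of congruences:
the smallest congruence containing both. -/
def latConJoin {α : Type*} [Lattice α] (θ₁ θ₂ : α → α → Prop) : α → α → Prop :=
  fun x y => ∀ r : α → α → Prop, IsLatCon r →
    (∀ u v : α, θ₁ u v → r u v) → (∀ u v : α, θ₂ u v → r u v) → r x y

section Aux

variable {α : Type*} [Lattice α]

/-- The transitive closure of the union of two lattice congruences is a
lattice congruence. -/
theorem isLatCon_transGen_union {θ₁ θ₂ : α → α → Prop}
    (h₁ : IsLatCon θ₁) (h₂ : IsLatCon θ₂) :
    IsLatCon (Relation.TransGen fun x y => θ₁ x y ∨ θ₂ x y) := by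
  set R : α → α → Prop := fun x y => θ₁ x y ∨ θ₂ x y with hR
  set T := Relation.TransGen R with hT
  have hstep_sup : ∀ x y u : α, R x y → R (x ⊔ u) (y ⊔ u) := by
    rintro x y u (h | h)
    · exact Or.inl ((h₁.2 x y u u h (h₁.1.refl u)).1
      )
    · exact Or.inr ((h₂.2 x y u u h (h₂.1.refl u)).1)
  have hstep_inf : ∀ x y u : α, R x y → R (x ⊓ u) (y ⊓ u) := by
    rintro x y u (h | h)
    · exact Or.inl ((h₁.2 x y u u h (h₁.1.refl u)).2)
    · exact Or.inr ((h₂.2 x y u u h (h₂.1.refl u)).2)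
  have hT_sup : ∀ x y u : α, T x y → T (x ⊔ u) (y ⊔ u) := by
    intro x y u h
    induction h with
    | single h => exact Relation.TransGen.single (hstep_sup _ _ _ h)
    | tail _ h ih => exact ih.tail (hstep_sup _ _ _ h)
  have hT_inf : ∀ x y u : α, T x y → T (x ⊓ u) (y ⊓ u) := by
    intro x y u h
    induction h with
    | single h => exact Relation.TransGen.single (hstep_inf _ _ _ h)
    | tail _ h ih => exact ih.tail (hstep_inf _ _ _ h)
  refine ⟨⟨fun x => Relation.TransGen.single (Or.inl (h₁.1.refl x)), ?_,
      fun h h' => h.trans h'⟩, ?_⟩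
  · have hRsymm : ∀ u v, R u v → R v u := by
      rintro u v (h | h)
      · exact Or.inl (h₁.1.symm h)
      · exact Or.inr (h₂.1.symm h)
    intro x y h
    induction h with
    | single h => exact Relation.TransGen.single (hRsymm _ _ h)
    | tail _ h ih => exact (Relation.TransGen.single (hRsymm _ _ h)).trans ih
  · intro x y u v hxy huv
    constructor
    · have h1 : T (x ⊔ u) (y ⊔ u) := hT_sup _ _ _ hxy
      have h2 : T (y ⊔ u) (y ⊔ v) := by
        rw [sup_comm y u, sup_comm y v]; exact hT_sup _ _ _ huv
      exact h1.trans h2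
    · have h1 : T (x ⊓ u) (y ⊓ u) := hT_inf _ _ _ hxy
      have h2 : T (y ⊓ u) (y ⊓ v) := by
        rw [inf_comm y u, inf_comm y v]; exact hT_inf _ _ _ huv
      exact h1.trans h2

end Aux

/-- If `a ⋖ b` in a finite lattice, then `con(a, b)` is a join-irreducible
element of the congruence lattice: it is not the diagonal congruence, and if it
is the join of two congruences then it equals one of them. -/
theorem conGen_prime_supIrred {α : Type*} [Lattice α] [Fintype α]
    (a b : α) (hab : a ⋖ b) :
    latConGen a b ≠ (· = ·) ∧
      ∀ θ₁ θ₂ : α → α → Prop, IsLatCon θ₁ → IsLatCon θ₂ →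
        latConGen a b = latConJoin θ₁ θ₂ →
          latConGen a b = θ₁ ∨ latConGen a b = θ₂ := by
  have hne : a ≠ b := hab.lt.ne
  constructor
  · intro h
    have : latConGen a b a b := fun r _ hr => hr
    rw [h] at this
    exact hne this
  · intro θ₁ θ₂ h₁ h₂ heq
    set R : α → α → Prop := fun x y => θ₁ x y ∨ θ₂ x y with hR
    set T := Relation.TransGen R with hT
    have hTcon : IsLatCon T := isLatCon_transGen_union h₁ h₂
    -- a and b are related by T
    have hTab : T a b := by
      have hgen : latConGen a b a b := fun r _ hr => hr
      rw [heq] at hgen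
      exact hgen T hTcon (fun u v h => Relation.TransGen.single (Or.inl h))
        (fun u v h => Relation.TransGen.single (Or.inr h))
    -- project into the interval [a, b]
    set f : α → α := fun z => z ⊓ b ⊔ a with hf
    have hfa : f a = a := by
      simp [hf, inf_eq_left.mpr hab.le]
    have hfb : f b = b := by
      simp [hf, sup_eq_left.mpr hab.le]
    have hfmem : ∀ z, f z = a ∨ f z = b := by
      intro z
      rcases hab.eq_or_eq (c := f z) le_sup_right
          (sup_le inf_le_right hab.le) with h | h
      · exact Or.inl h
      · exact Or.inr h
    have hstep : ∀ x y, R x y → R (f x) (f y) := by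
      rintro x y (h | h)
      · exact Or.inl ((h₁.2 _ _ a a ((h₁.2 x y b b h (h₁.1.refl b)).2)
          (h₁.1.refl a)).1)
      · exact Or.inr ((h₂.2 _ _ a a ((h₂.2 x y b b h (h₂.1.refl b)).2)
          (h₂.1.refl a)).1)
    -- scan the chain: either f stays at a, or some θ relates a and b
    have key : ∀ z, T a z → f z = a ∨ θ₁ a b ∨ θ₂ a b := by
      intro z h
      induction h with
      | single h =>
        rcases hstep _ _ h with h' | h' <;> rw [hfa] at h'
        · rcases hfmem _ with h'' | h''
          · exact Or.inl h''
          · rw [h''] at h'; exact Or.inr (Or.inl h')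
        · rcases hfmem _ with h'' | h''
          · exact Or.inl h''
          · rw [h''] at h'; exact Or.inr (Or.inr h')
      | @tail y z _ h ih =>
        rcases ih with hy | hdone
        · rcases hstep _ _ h with h' | h' <;> rw [hy] at h'
          · rcases hfmem z with h'' | h''
            · exact Or.inl h''
            · rw [h''] at h'; exact Or.inr (Or.inl h')
          · rcases hfmem z with h'' | h''
            · exact Or.inl h''
            · rw [h''] at h'; exact Or.inr (Or.inr h')
        · exact Or.inr hdone
    have hθ : θ₁ a b ∨ θ₂ a b := by
      rcases key b hTab with h | h
      · rw [hfb] at h; exact absurd h.symm hne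
      · exact h
    rcases hθ with h | h
    · left
      funext x y
      apply propext
      constructor
      · intro hxy
        exact hxy θ₁ h₁ h
      · intro hxy
        rw [heq]
        intro r _ hr _
        exact hr x y hxy
    · right
      funext x y
      apply propext
      constructor
      · intro hxy
        exact hxy θ₂ h₂ h
      · intro hxy
        rw [heq]
        intro r _ _ hr
        exact hr x y hxy
end

section
/- Let K be a finite lattice, let L be a sublattice of K, and let α be a lattice congruence of L. Assume that for each α-class C there are elements u_C ≤ v_C of L with C = {x ∈ L : u_C ≤ x ≤ v_C}, and assume that the family of intervals of K given by {x ∈ K : u_C ≤ x ≤ v_C}, as C ranges over the α-classes, forms a partition of K (the sets cover K and are pairwise disjoint). Then the equivalence relation β on K whose classes are these intervals is a lattice congruence of K, and the restriction of β to L equals α; in particular, α extends to a congruence of K. -/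
/-- Let `K` be a finite lattice, `L` a sublattice, and `ρ` a congruence of `L`
whose class of `a` is the interval `[u a, v a]` of `L`. If the intervals
`[u a, v a]` of `K` (as `a` ranges over `L`) cover `K` and overlap only when
the corresponding classes coincide (i.e., they form a partition of `K`), then
the equivalence relation `β` on `K` whose classes are these intervals is a
lattice congruence of `K` whose restriction to `L` equals `ρ`. -/
theorem congruence_extension {K : Type*} [Lattice K] [Fintype K]
    (L : Sublattice K) (ρ : ↥L → ↥L → Prop) (hρ : IsLatCon ρ)
    (u v : ↥L → ↥L)
    (huv : ∀ a : ↥L, u a ≤ v a)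
    (hclass : ∀ a x : ↥L, ρ a x ↔ u a ≤ x ∧ x ≤ v a)
    (hcover : ∀ x : K, ∃ a : ↥L, (u a : K) ≤ x ∧ x ≤ (v a : K))
    (hdisj : ∀ a b : ↥L, ∀ x : K,
      ((u a : K) ≤ x ∧ x ≤ (v a : K)) → ((u b : K) ≤ x ∧ x ≤ (v b : K)) → ρ a b) :
    IsLatCon (fun x y : K => ∃ a : ↥L,
        ((u a : K) ≤ x ∧ x ≤ (v a : K)) ∧ ((u a : K) ≤ y ∧ y ≤ (v a : K))) ∧
      ∀ x y : ↥L,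
        (∃ a : ↥L, ((u a : K) ≤ (x : K) ∧ (x : K) ≤ (v a : K)) ∧
            ((u a : K) ≤ (y : K) ∧ (y : K) ≤ (v a : K))) ↔ ρ x y := by
  obtain ⟨heq, hcomp⟩ := hρ
  -- basic facts
  have hru : ∀ a : ↥L, ρ a (u a) := fun a => (hclass a (u a)).2 ⟨le_refl _, huv a⟩
  have hrv : ∀ a : ↥L, ρ a (v a) := fun a => (hclass a (v a)).2 ⟨huv a, le_refl _⟩
  -- ρ a b implies equal endpoints
  have hend : ∀ a b : ↥L, ρ a b → u a = u b ∧ v a = v b := by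
    intro a b hab
    have h1 : ρ b (u a) := heq.trans (heq.symm hab) (hru a)
    have h2 : ρ a (u b) := heq.trans hab (hru b)
    have h3 : ρ b (v a) := heq.trans (heq.symm hab) (hrv a)
    have h4 : ρ a (v b) := heq.trans hab (hrv b)
    exact ⟨le_antisymm ((hclass a (u b)).1 h2).1 ((hclass b (u a)).1 h1).1,
      le_antisymm ((hclass b (v a)).1 h3).2 ((hclass a (v b)).1 h4).2⟩
  refine ⟨⟨⟨?_, ?_, ?_⟩, ?_⟩, ?_⟩
  · -- refl
    intro x
    obtain ⟨a, ha⟩ := hcover x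
    exact ⟨a, ha, ha⟩
  · -- symm
    rintro x y ⟨a, hx, hy⟩
    exact ⟨a, hy, hx⟩
  · -- trans
    rintro x y z ⟨a, hx, hy⟩ ⟨b, hy', hz⟩
    have hab := hdisj a b y hy hy'
    obtain ⟨hu, hv⟩ := hend a b hab
    exact ⟨a, hx, by rw [hu, hv]; exact hz⟩
  · -- compatibility
    rintro x y c d ⟨a, hx, hy⟩ ⟨b, hc, hd⟩
    have hjoin : ρ (a ⊔ b) (u a ⊔ u b) := (hcomp a (u a) b (u b) (hru a) (hru b)).1
    have hjoin' : ρ (a ⊔ b) (v a ⊔ v b) := (hcomp a (v a) b (v b) (hrv a) (hrv b)).1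
    have hmeet : ρ (a ⊓ b) (u a ⊓ u b) := (hcomp a (u a) b (u b) (hru a) (hru b)).2
    have hmeet' : ρ (a ⊓ b) (v a ⊓ v b) := (hcomp a (v a) b (v b) (hrv a) (hrv b)).2
    have h1 : (u (a ⊔ b) : K) ≤ (u a : K) ⊔ (u b : K) := ((hclass _ _).1 hjoin).1
    have h2 : (v a : K) ⊔ (v b : K) ≤ (v (a ⊔ b) : K) := ((hclass _ _).1 hjoin').2
    have h3 : (u (a ⊓ b) : K) ≤ (u a : K) ⊓ (u b : K) := ((hclass _ _).1 hmeet).1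
    have h4 : (v a : K) ⊓ (v b : K) ≤ (v (a ⊓ b) : K) := ((hclass _ _).1 hmeet').2
    constructor
    · refine ⟨a ⊔ b, ⟨h1.trans (sup_le_sup hx.1 hc.1), (sup_le_sup hx.2 hc.2).trans h2⟩,
        ⟨h1.trans (sup_le_sup hy.1 hd.1), (sup_le_sup hy.2 hd.2).trans h2⟩⟩
    · refine ⟨a ⊓ b, ⟨h3.trans (inf_le_inf hx.1 hc.1), (inf_le_inf hx.2 hc.2).trans h4⟩,
        ⟨h3.trans (inf_le_inf hy.1 hd.1), (inf_le_inf hy.2 hd.2).trans h4⟩⟩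
  · -- restriction equals ρ
    intro x y
    constructor
    · rintro ⟨a, hx, hy⟩
      have hax : ρ a x := (hclass a x).2 ⟨hx.1, hx.2⟩
      have hay : ρ a y := (hclass a y).2 ⟨hy.1, hy.2⟩
      exact heq.trans (heq.symm hax) hay
    · intro hxy
      obtain ⟨h1, h2⟩ := (hclass x y).1 hxy
      obtain ⟨h3, h4⟩ := (hclass x x).1 (heq.refl x)
      exact ⟨x, ⟨h3, h4⟩, ⟨h1, h2⟩⟩
end

section
/- Let L be a finite semimodular lattice that is slim, i.e., the set of join-irreducible elements of L is the union of two chains. Suppose an element a of L covers three pairwise distinct elements x₁, x₂, x₃. Then there is a labeling y₁, y₂, y₃ of the elements x₁, x₂, x₃ (i.e., {y₁, y₂, y₃} = {x₁, x₂, x₃}) such that the seven elements a, y₁, y₂, y₃, y₁ ⊓ y₂, y₂ ⊓ y₃, y₁ ⊓ y₃ are pairwise distinct and satisfy: y₁ ⊔ y₂ = y₁ ⊔ y₃ = y₂ ⊔ y₃ = a, (y₁ ⊓ y₂) ⊔ (y₂ ⊓ y₃) = y₂, (y₁ ⊓ y₂) ⊔ y₃ = a, y₁ ⊔ (y₂ ⊓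 y₃) = a, and y₁ ⊓ y₃ = (y₁ ⊓ y₂) ⊓ (y₂ ⊓ y₃). Consequently, the set {a, y₁, y₂, y₃, y₁ ⊓ y₂, y₂ ⊓ y₃, y₁ ⊓ y₃} is closed under ⊔ and ⊓, so the sublattice of L generated by {x₁, x₂, x₃} is this seven-element sublattice, which is isomorphic to the lattice S₇. -/
/-- `j` is join-irreducible: it is not the least element, and whenever
`j = x ⊔ y` we have `j = x` or `j = y`. -/
def JoinIrreducible {α : Type*} [Lattice α] (j : α) : Prop :=
  (¬ ∀ x : α, j ≤ x) ∧ ∀ x y : α, j = x ⊔ y → j = x ∨ j = y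

section Aux

variable {α : Type*} [Lattice α] [Fintype α]

/-- In a finite lattice, if every join-irreducible below `z` is below `y`, then `z ≤ y`. -/
lemma aux_le_of_ji (y : α) : ∀ z : α, (∀ j : α, JoinIrreducible j → j ≤ z → j ≤ y) → z ≤ y := by
  intro z
  induction z using WellFoundedLT.induction with
  | ind z ih =>
    intro h
    by_cases hbot : ∀ w : α, z ≤ w
    · exact hbot y
    by_cases hji : JoinIrreducible z
    · exact h z hji le_rfl
    have hB : ¬ ∀ x y : α, z = x ⊔ y → z = x ∨ z = y := fun hB => hji ⟨hbot, hB⟩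
    push_neg at hB
    obtain ⟨u, v, huv, hu, hv⟩ := hB
    have hul : u < z := lt_of_le_of_ne (huv ▸ le_sup_left) (fun e => hu e.symm)
    have hvl : v < z := lt_of_le_of_ne (huv ▸ le_sup_right) (fun e => hv e.symm)
    have h1 : u ≤ y := ih u hul (fun j hj hle => h j hj (hle.trans hul.le))
    have h2 : v ≤ y := ih v hvl (fun j hj hle => h j hj (hle.trans hvl.le))
    rw [huv]
    exact sup_le h1 h2

/-- Totality of the "coordinate" preorder coming from a chain. -/
lemma chain_total {C : Set α} (hC : IsChain (· ≤ ·) C) {u w : α}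
    (h : ¬ ∀ j ∈ C, JoinIrreducible j → j ≤ u → j ≤ w) :
    ∀ j ∈ C, JoinIrreducible j → j ≤ w → j ≤ u := by
  push_neg at h
  obtain ⟨j₀, hj₀C, hj₀i, hj₀u, hj₀w⟩ := h
  intro j hjC hji hjw
  rcases eq_or_ne j j₀ with rfl | hne
  · exact absurd hjw hj₀w
  rcases hC hjC hj₀C hne with hle | hle
  · exact hle.trans hj₀u
  · exact absurd (hle.trans hjw) hj₀w

lemma core (C₁ C₂ : Set α) (hC₁ : IsChain (· ≤ ·) C₁) (hC₂ : IsChain (· ≤ ·) C₂)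
    (hcov : ∀ j : α, JoinIrreducible j → j ∈ C₁ ∪ C₂)
    (a y₁ y₂ y₃ : α) (h1 : y₁ ⋖ a) (h2 : y₂ ⋖ a) (h3 : y₃ ⋖ a)
    (h12 : y₁ ≠ y₂) (h13 : y₁ ≠ y₃) (h23 : y₂ ≠ y₃)
    (s12 : ¬ ∀ j ∈ C₁, JoinIrreducible j → j ≤ y₁ → j ≤ y₂)
    (s23 : ¬ ∀ j ∈ C₁, JoinIrreducible j → j ≤ y₂ → j ≤ y₃) :
    [a, y₁, y₂, y₃, y₁ ⊓ y₂, y₂ ⊓ y₃, y₁ ⊓ y₃].Pairwise (· ≠ ·) ∧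
      y₁ ⊔ y₂ = a ∧ y₁ ⊔ y₃ = a ∧ y₂ ⊔ y₃ = a ∧
      (y₁ ⊓ y₂) ⊔ (y₂ ⊓ y₃) = y₂ ∧
      (y₁ ⊓ y₂) ⊔ y₃ = a ∧
      y₁ ⊔ (y₂ ⊓ y₃) = a ∧
      y₁ ⊓ y₃ = (y₁ ⊓ y₂) ⊓ (y₂ ⊓ y₃) ∧
      (∀ u ∈ ({a, y₁, y₂, y₃, y₁ ⊓ y₂, y₂ ⊓ y₃, y₁ ⊓ y₃} : Set α),
        ∀ w ∈ ({a, y₁, y₂, y₃, y₁ ⊓ y₂, y₂ ⊓ y₃, y₁ ⊓ y₃} : Set α),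
          u ⊔ w ∈ ({a, y₁, y₂, y₃, y₁ ⊓ y₂, y₂ ⊓ y₃, y₁ ⊓ y₃} : Set α) ∧
          u ⊓ w ∈ ({a, y₁, y₂, y₃, y₁ ⊓ y₂, y₂ ⊓ y₃, y₁ ⊓ y₃} : Set α)) := by
  -- comparisons via both chains give order
  have key : ∀ z w : α, (∀ j ∈ C₁, JoinIrreducible j → j ≤ z → j ≤ w) →
      (∀ j ∈ C₂, JoinIrreducible j → j ≤ z → j ≤ w) → z ≤ w := fun z w hA hB =>
    aux_le_of_ji w z (fun j hj hle => (hcov j hj).elim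
      (fun hc => hA j hc hj hle) (fun hc => hB j hc hj hle))
  -- incomparability of distinct covers
  have nle : ∀ u w : α, u ⋖ a → w ⋖ a → u ≠ w → ¬ u ≤ w := by
    intro u w hu hw hne hle
    exact hu.2 (hle.lt_of_ne hne) hw.lt
  have n12 := nle y₁ y₂ h1 h2 h12
  have n21 := nle y₂ y₁ h2 h1 h12.symm
  have n13 := nle y₁ y₃ h1 h3 h13
  have n31 := nle y₃ y₁ h3 h1 h13.symm
  have n23 := nle y₂ y₃ h2 h3 h23
  have n32 := nle y₃ y₂ h3 h2 h23.symm
  -- joins of distinct covers are `a`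
  have jn : ∀ u w : α, u ⋖ a → w ⋖ a → u ≠ w → u ⊔ w = a := by
    intro u w hu hw hne
    have hlt : u < u ⊔ w := left_lt_sup.mpr (nle w u hw hu hne.symm)
    exact ((sup_le hu.le hw.le).lt_or_eq).resolve_left (hu.2 hlt)
  have A1 := jn y₁ y₂ h1 h2 h12
  have A2 := jn y₁ y₃ h1 h3 h13
  have A3 := jn y₂ y₃ h2 h3 h23
  -- coordinate comparisons
  have R1_21 : ∀ j ∈ C₁, JoinIrreducible j → j ≤ y₂ → j ≤ y₁ := chain_total hC₁ s12
  have R1_32 : ∀ j ∈ C₁, JoinIrreducible j → j ≤ y₃ → j ≤ y₂ := chain_total hC₁ s23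
  have nR2_21 : ¬ ∀ j ∈ C₂, JoinIrreducible j → j ≤ y₂ → j ≤ y₁ :=
    fun hR => n21 (key y₂ y₁ R1_21 hR)
  have nR2_32 : ¬ ∀ j ∈ C₂, JoinIrreducible j → j ≤ y₃ → j ≤ y₂ :=
    fun hR => n32 (key y₃ y₂ R1_32 hR)
  have R2_12 : ∀ j ∈ C₂, JoinIrreducible j → j ≤ y₁ → j ≤ y₂ := chain_total hC₂ nR2_21
  have R2_23 : ∀ j ∈ C₂, JoinIrreducible j → j ≤ y₂ → j ≤ y₃ := chain_total hC₂ nR2_32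
  -- key inequality: y₁ ⊓ y₃ ≤ y₂
  have F : y₁ ⊓ y₃ ≤ y₂ :=
    key _ _ (fun j hc hj hle => R1_32 j hc hj (hle.trans inf_le_right))
      (fun j hc hj hle => R2_12 j hc hj (hle.trans inf_le_left))
  -- the S₇ relations
  have B : (y₁ ⊓ y₂) ⊔ (y₂ ⊓ y₃) = y₂ := by
    refine le_antisymm (sup_le inf_le_right inf_le_left) (key _ _ ?_ ?_)
    · exact fun j hc hj hle => le_trans (le_inf (R1_21 j hc hj hle) hle) le_sup_left
    · exact fun j hc hj hle => le_trans (le_inf hle (R2_23 j hc hj hle)) le_sup_right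
  have C : (y₁ ⊓ y₂) ⊔ y₃ = a := by
    have hw := s23
    push_neg at hw
    obtain ⟨j, hjC, hji, hj2, hj3⟩ := hw
    have hj1 : j ≤ y₁ := R1_21 j hjC hji hj2
    have hnle : ¬ (y₁ ⊓ y₂) ≤ y₃ := fun h => hj3 ((le_inf hj1 hj2).trans h)
    have hlt : y₃ < (y₁ ⊓ y₂) ⊔ y₃ := right_lt_sup.mpr hnle
    exact ((sup_le (inf_le_right.trans h2.le) h3.le).lt_or_eq).resolve_left (h3.2 hlt)
  have D : y₁ ⊔ (y₂ ⊓ y₃) = a := by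
    have hw := nR2_21
    push_neg at hw
    obtain ⟨j, hjC, hji, hj2, hj1⟩ := hw
    have hj3 : j ≤ y₃ := R2_23 j hjC hji hj2
    have hnle : ¬ (y₂ ⊓ y₃) ≤ y₁ := fun h => hj1 ((le_inf hj2 hj3).trans h)
    have hlt : y₁ < y₁ ⊔ (y₂ ⊓ y₃) := left_lt_sup.mpr hnle
    exact ((sup_le h1.le (inf_le_left.trans h2.le)).lt_or_eq).resolve_left (h1.2 hlt)
  have E : y₁ ⊓ y₃ = (y₁ ⊓ y₂) ⊓ (y₂ ⊓ y₃) :=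
    le_antisymm (le_inf (le_inf inf_le_left F) (le_inf F inf_le_right))
      (le_inf (inf_le_left.trans inf_le_left) (inf_le_right.trans inf_le_right))
  have G : y₁ ⊓ (y₂ ⊓ y₃) = y₁ ⊓ y₃ :=
    le_antisymm (le_inf inf_le_left (inf_le_right.trans inf_le_right))
      (le_inf inf_le_left (le_inf F inf_le_right))
  have H : (y₁ ⊓ y₂) ⊓ y₃ = y₁ ⊓ y₃ :=
    le_antisymm (le_inf (inf_le_left.trans inf_le_left) inf_le_right)
      (le_inf (le_inf inf_le_left F) inf_le_right)
  -- the 21 disequalities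
  have ne01 : a ≠ y₁ := h1.lt.ne'
  have ne02 : a ≠ y₂ := h2.lt.ne'
  have ne03 : a ≠ y₃ := h3.lt.ne'
  have ne04 : a ≠ y₁ ⊓ y₂ := (lt_of_le_of_lt inf_le_left h1.lt).ne'
  have ne05 : a ≠ y₂ ⊓ y₃ := (lt_of_le_of_lt inf_le_left h2.lt).ne'
  have ne06 : a ≠ y₁ ⊓ y₃ := (lt_of_le_of_lt inf_le_left h1.lt).ne'
  have ne14 : y₁ ≠ y₁ ⊓ y₂ := fun e => n12 (le_of_eq_of_le e inf_le_right)
  have ne15 : y₁ ≠ y₂ ⊓ y₃ := fun e => n12 (le_of_eq_of_le e inf_le_left)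
  have ne16 : y₁ ≠ y₁ ⊓ y₃ := fun e => n13 (le_of_eq_of_le e inf_le_right)
  have ne24 : y₂ ≠ y₁ ⊓ y₂ := fun e => n21 (le_of_eq_of_le e inf_le_left)
  have ne25 : y₂ ≠ y₂ ⊓ y₃ := fun e => n23 (le_of_eq_of_le e inf_le_right)
  have ne26 : y₂ ≠ y₁ ⊓ y₃ := fun e => n21 (le_of_eq_of_le e inf_le_left)
  have ne34 : y₃ ≠ y₁ ⊓ y₂ := fun e => n32 (le_of_eq_of_le e inf_le_right)
  have ne35 : y₃ ≠ y₂ ⊓ y₃ := fun e => n32 (le_of_eq_of_le e inf_le_left)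
  have ne36 : y₃ ≠ y₁ ⊓ y₃ := fun e => n31 (le_of_eq_of_le e inf_le_left)
  have ne45 : y₁ ⊓ y₂ ≠ y₂ ⊓ y₃ := by
    intro e
    apply n21
    calc y₂ = (y₁ ⊓ y₂) ⊔ (y₂ ⊓ y₃) := B.symm
    _ = (y₁ ⊓ y₂) ⊔ (y₁ ⊓ y₂) := by rw [e]
    _ = y₁ ⊓ y₂ := sup_idem _
    _ ≤ y₁ := inf_le_left
  have ne46 : y₁ ⊓ y₂ ≠ y₁ ⊓ y₃ := fun e =>
    h3.lt.ne ((sup_eq_right.mpr (le_of_eq_of_le e inf_le_right)).symm.trans C)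
  have ne56 : y₂ ⊓ y₃ ≠ y₁ ⊓ y₃ := fun e =>
    h1.lt.ne ((sup_eq_left.mpr (le_of_eq_of_le e inf_le_left)).symm.trans D)
  refine ⟨?_, A1, A2, A3, B, C, D, E, ?_⟩
  · refine .cons (fun z hz => ?_) (.cons (fun z hz => ?_) (.cons (fun z hz => ?_)
      (.cons (fun z hz => ?_) (.cons (fun z hz => ?_) (.cons (fun z hz => ?_)
      (.cons (fun z hz => ?_) .nil)))))) <;>
      fin_cases hz <;>
      first
        | assumption
        | (exact h12) | (exact h13) | (exact h23)
        | (exact ne45.symm) | (exact ne46.symm) | (exact ne56.symm)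
  · -- all the order facts among the seven elements
    have l10 : y₁ ≤ a := h1.le
    have l20 : y₂ ≤ a := h2.le
    have l30 : y₃ ≤ a := h3.le
    have l41 : y₁ ⊓ y₂ ≤ y₁ := inf_le_left
    have l42 : y₁ ⊓ y₂ ≤ y₂ := inf_le_right
    have l40 : y₁ ⊓ y₂ ≤ a := l41.trans l10
    have l52 : y₂ ⊓ y₃ ≤ y₂ := inf_le_left
    have l53 : y₂ ⊓ y₃ ≤ y₃ := inf_le_right
    have l50 : y₂ ⊓ y₃ ≤ a := l52.trans l20
    have l61 : y₁ ⊓ y₃ ≤ y₁ := inf_le_left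
    have l62 : y₁ ⊓ y₃ ≤ y₂ := F
    have l63 : y₁ ⊓ y₃ ≤ y₃ := inf_le_right
    have l60 : y₁ ⊓ y₃ ≤ a := l61.trans l10
    have l64 : y₁ ⊓ y₃ ≤ y₁ ⊓ y₂ := le_inf l61 F
    have l65 : y₁ ⊓ y₃ ≤ y₂ ⊓ y₃ := le_inf F l63
    have qs10 : y₁ ⊔ a = a := sup_eq_right.mpr l10
    have qs01 : a ⊔ y₁ = a := sup_eq_left.mpr l10
    have qm10 : y₁ ⊓ a = y₁ := inf_eq_left.mpr l10
    have qm01 : a ⊓ y₁ = y₁ := inf_eq_right.mpr l10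
    have qs20 : y₂ ⊔ a = a := sup_eq_right.mpr l20
    have qs02 : a ⊔ y₂ = a := sup_eq_left.mpr l20
    have qm20 : y₂ ⊓ a = y₂ := inf_eq_left.mpr l20
    have qm02 : a ⊓ y₂ = y₂ := inf_eq_right.mpr l20
    have qs30 : y₃ ⊔ a = a := sup_eq_right.mpr l30
    have qs03 : a ⊔ y₃ = a := sup_eq_left.mpr l30
    have qm30 : y₃ ⊓ a = y₃ := inf_eq_left.mpr l30
    have qm03 : a ⊓ y₃ = y₃ := inf_eq_right.mpr l30
    have qs40 : (y₁ ⊓ y₂) ⊔ a = a := sup_eq_right.mpr l40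
    have qs04 : a ⊔ (y₁ ⊓ y₂) = a := sup_eq_left.mpr l40
    have qm40 : (y₁ ⊓ y₂) ⊓ a = (y₁ ⊓ y₂) := inf_eq_left.mpr l40
    have qm04 : a ⊓ (y₁ ⊓ y₂) = (y₁ ⊓ y₂) := inf_eq_right.mpr l40
    have qs50 : (y₂ ⊓ y₃) ⊔ a = a := sup_eq_right.mpr l50
    have qs05 : a ⊔ (y₂ ⊓ y₃) = a := sup_eq_left.mpr l50
    have qm50 : (y₂ ⊓ y₃) ⊓ a = (y₂ ⊓ y₃) := inf_eq_left.mpr l50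
    have qm05 : a ⊓ (y₂ ⊓ y₃) = (y₂ ⊓ y₃) := inf_eq_right.mpr l50
    have qs60 : (y₁ ⊓ y₃) ⊔ a = a := sup_eq_right.mpr l60
    have qs06 : a ⊔ (y₁ ⊓ y₃) = a := sup_eq_left.mpr l60
    have qm60 : (y₁ ⊓ y₃) ⊓ a = (y₁ ⊓ y₃) := inf_eq_left.mpr l60
    have qm06 : a ⊓ (y₁ ⊓ y₃) = (y₁ ⊓ y₃) := inf_eq_right.mpr l60
    have qs41 : (y₁ ⊓ y₂) ⊔ y₁ = y₁ := sup_eq_right.mpr l41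
    have qs14 : y₁ ⊔ (y₁ ⊓ y₂) = y₁ := sup_eq_left.mpr l41
    have qm41 : (y₁ ⊓ y₂) ⊓ y₁ = (y₁ ⊓ y₂) := inf_eq_left.mpr l41
    have qm14 : y₁ ⊓ (y₁ ⊓ y₂) = (y₁ ⊓ y₂) := inf_eq_right.mpr l41
    have qs42 : (y₁ ⊓ y₂) ⊔ y₂ = y₂ := sup_eq_right.mpr l42
    have qs24 : y₂ ⊔ (y₁ ⊓ y₂) = y₂ := sup_eq_left.mpr l42
    have qm42 : (y₁ ⊓ y₂) ⊓ y₂ = (y₁ ⊓ y₂) := inf_eq_left.mpr l42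
    have qm24 : y₂ ⊓ (y₁ ⊓ y₂) = (y₁ ⊓ y₂) := inf_eq_right.mpr l42
    have qs52 : (y₂ ⊓ y₃) ⊔ y₂ = y₂ := sup_eq_right.mpr l52
    have qs25 : y₂ ⊔ (y₂ ⊓ y₃) = y₂ := sup_eq_left.mpr l52
    have qm52 : (y₂ ⊓ y₃) ⊓ y₂ = (y₂ ⊓ y₃) := inf_eq_left.mpr l52
    have qm25 : y₂ ⊓ (y₂ ⊓ y₃) = (y₂ ⊓ y₃) := inf_eq_right.mpr l52
    have qs53 : (y₂ ⊓ y₃) ⊔ y₃ = y₃ := sup_eq_right.mpr l53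
    have qs35 : y₃ ⊔ (y₂ ⊓ y₃) = y₃ := sup_eq_left.mpr l53
    have qm53 : (y₂ ⊓ y₃) ⊓ y₃ = (y₂ ⊓ y₃) := inf_eq_left.mpr l53
    have qm35 : y₃ ⊓ (y₂ ⊓ y₃) = (y₂ ⊓ y₃) := inf_eq_right.mpr l53
    have qs61 : (y₁ ⊓ y₃) ⊔ y₁ = y₁ := sup_eq_right.mpr l61
    have qs16 : y₁ ⊔ (y₁ ⊓ y₃) = y₁ := sup_eq_left.mpr l61
    have qm61 : (y₁ ⊓ y₃) ⊓ y₁ = (y₁ ⊓ y₃) := inf_eq_left.mpr l61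
    have qm16 : y₁ ⊓ (y₁ ⊓ y₃) = (y₁ ⊓ y₃) := inf_eq_right.mpr l61
    have qs62 : (y₁ ⊓ y₃) ⊔ y₂ = y₂ := sup_eq_right.mpr l62
    have qs26 : y₂ ⊔ (y₁ ⊓ y₃) = y₂ := sup_eq_left.mpr l62
    have qm62 : (y₁ ⊓ y₃) ⊓ y₂ = (y₁ ⊓ y₃) := inf_eq_left.mpr l62
    have qm26 : y₂ ⊓ (y₁ ⊓ y₃) = (y₁ ⊓ y₃) := inf_eq_right.mpr l62
    have qs63 : (y₁ ⊓ y₃) ⊔ y₃ = y₃ := sup_eq_right.mpr l63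
    have qs36 : y₃ ⊔ (y₁ ⊓ y₃) = y₃ := sup_eq_left.mpr l63
    have qm63 : (y₁ ⊓ y₃) ⊓ y₃ = (y₁ ⊓ y₃) := inf_eq_left.mpr l63
    have qm36 : y₃ ⊓ (y₁ ⊓ y₃) = (y₁ ⊓ y₃) := inf_eq_right.mpr l63
    have qs64 : (y₁ ⊓ y₃) ⊔ (y₁ ⊓ y₂) = (y₁ ⊓ y₂) := sup_eq_right.mpr l64
    have qs46 : (y₁ ⊓ y₂) ⊔ (y₁ ⊓ y₃) = (y₁ ⊓ y₂) := sup_eq_left.mpr l64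
    have qm64 : (y₁ ⊓ y₃) ⊓ (y₁ ⊓ y₂) = (y₁ ⊓ y₃) := inf_eq_left.mpr l64
    have qm46 : (y₁ ⊓ y₂) ⊓ (y₁ ⊓ y₃) = (y₁ ⊓ y₃) := inf_eq_right.mpr l64
    have qs65 : (y₁ ⊓ y₃) ⊔ (y₂ ⊓ y₃) = (y₂ ⊓ y₃) := sup_eq_right.mpr l65
    have qs56 : (y₂ ⊓ y₃) ⊔ (y₁ ⊓ y₃) = (y₂ ⊓ y₃) := sup_eq_left.mpr l65
    have qm65 : (y₁ ⊓ y₃) ⊓ (y₂ ⊓ y₃) = (y₁ ⊓ y₃) := inf_eq_left.mpr l65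
    have qm56 : (y₂ ⊓ y₃) ⊓ (y₁ ⊓ y₃) = (y₁ ⊓ y₃) := inf_eq_right.mpr l65
    have qs12 : y₁ ⊔ y₂ = a := A1
    have qs21 : y₂ ⊔ y₁ = a := (sup_comm _ _).trans qs12
    have qm12 : y₁ ⊓ y₂ = (y₁ ⊓ y₂) := rfl
    have qm21 : y₂ ⊓ y₁ = (y₁ ⊓ y₂) := (inf_comm _ _).trans qm12
    have qs13 : y₁ ⊔ y₃ = a := A2
    have qs31 : y₃ ⊔ y₁ = a := (sup_comm _ _).trans qs13
    have qm13 : y₁ ⊓ y₃ = (y₁ ⊓ y₃) := rfl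
    have qm31 : y₃ ⊓ y₁ = (y₁ ⊓ y₃) := (inf_comm _ _).trans qm13
    have qs23 : y₂ ⊔ y₃ = a := A3
    have qs32 : y₃ ⊔ y₂ = a := (sup_comm _ _).trans qs23
    have qm23 : y₂ ⊓ y₃ = (y₂ ⊓ y₃) := rfl
    have qm32 : y₃ ⊓ y₂ = (y₂ ⊓ y₃) := (inf_comm _ _).trans qm23
    have qs45 : (y₁ ⊓ y₂) ⊔ (y₂ ⊓ y₃) = y₂ := B
    have qs54 : (y₂ ⊓ y₃) ⊔ (y₁ ⊓ y₂) = y₂ := (sup_comm _ _).trans qs45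
    have qm45 : (y₁ ⊓ y₂) ⊓ (y₂ ⊓ y₃) = (y₁ ⊓ y₃) := E.symm
    have qm54 : (y₂ ⊓ y₃) ⊓ (y₁ ⊓ y₂) = (y₁ ⊓ y₃) := (inf_comm _ _).trans qm45
    have qs43 : (y₁ ⊓ y₂) ⊔ y₃ = a := C
    have qs34 : y₃ ⊔ (y₁ ⊓ y₂) = a := (sup_comm _ _).trans qs43
    have qm43 : (y₁ ⊓ y₂) ⊓ y₃ = (y₁ ⊓ y₃) := H
    have qm34 : y₃ ⊓ (y₁ ⊓ y₂) = (y₁ ⊓ y₃) := (inf_comm _ _).trans qm43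
    have qs15 : y₁ ⊔ (y₂ ⊓ y₃) = a := D
    have qs51 : (y₂ ⊓ y₃) ⊔ y₁ = a := (sup_comm _ _).trans qs15
    have qm15 : y₁ ⊓ (y₂ ⊓ y₃) = (y₁ ⊓ y₃) := G
    have qm51 : (y₂ ⊓ y₃) ⊓ y₁ = (y₁ ⊓ y₃) := (inf_comm _ _).trans qm15
    have qs00 : a ⊔ a = a := sup_idem _
    have qm00 : a ⊓ a = a := inf_idem _
    have qs11 : y₁ ⊔ y₁ = y₁ := sup_idem _
    have qm11 : y₁ ⊓ y₁ = y₁ := inf_idem _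
    have qs22 : y₂ ⊔ y₂ = y₂ := sup_idem _
    have qm22 : y₂ ⊓ y₂ = y₂ := inf_idem _
    have qs33 : y₃ ⊔ y₃ = y₃ := sup_idem _
    have qm33 : y₃ ⊓ y₃ = y₃ := inf_idem _
    have qs44 : (y₁ ⊓ y₂) ⊔ (y₁ ⊓ y₂) = (y₁ ⊓ y₂) := sup_idem _
    have qm44 : (y₁ ⊓ y₂) ⊓ (y₁ ⊓ y₂) = (y₁ ⊓ y₂) := inf_idem _
    have qs55 : (y₂ ⊓ y₃) ⊔ (y₂ ⊓ y₃) = (y₂ ⊓ y₃) := sup_idem _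
    have qm55 : (y₂ ⊓ y₃) ⊓ (y₂ ⊓ y₃) = (y₂ ⊓ y₃) := inf_idem _
    have qs66 : (y₁ ⊓ y₃) ⊔ (y₁ ⊓ y₃) = (y₁ ⊓ y₃) := sup_idem _
    have qm66 : (y₁ ⊓ y₃) ⊓ (y₁ ⊓ y₃) = (y₁ ⊓ y₃) := inf_idem _
    intro u hu w hw
    simp only [Set.mem_insert_iff, Set.mem_singleton_iff] at hu hw ⊢
    rcases hu with rfl|rfl|rfl|rfl|rfl|rfl|rfl <;>
      rcases hw with rfl|rfl|rfl|rfl|rfl|rfl|rfl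
    · exact ⟨Or.inl qs00, Or.inl qm00⟩
    · exact ⟨Or.inl qs01, Or.inr (Or.inl qm01)⟩
    · exact ⟨Or.inl qs02, Or.inr (Or.inr (Or.inl qm02))⟩
    · exact ⟨Or.inl qs03, Or.inr (Or.inr (Or.inr (Or.inl qm03)))⟩
    · exact ⟨Or.inl qs04, Or.inr (Or.inr (Or.inr (Or.inr (Or.inl qm04))))⟩
    · exact ⟨Or.inl qs05, Or.inr (Or.inr (Or.inr (Or.inr (Or.inr (Or.inl qm05)))))⟩
    · exact ⟨Or.inl qs06, Or.inr (Or.inr (Or.inr (Or.inr (Or.inr (Or.inr (qm06))))))⟩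
    · exact ⟨Or.inl qs10, Or.inr (Or.inl qm10)⟩
    · exact ⟨Or.inr (Or.inl qs11), Or.inr (Or.inl qm11)⟩
    · exact ⟨Or.inl qs12, Or.inr (Or.inr (Or.inr (Or.inr (Or.inl qm12))))⟩
    · exact ⟨Or.inl qs13, Or.inr (Or.inr (Or.inr (Or.inr (Or.inr (Or.inr (qm13))))))⟩
    · exact ⟨Or.inr (Or.inl qs14), Or.inr (Or.inr (Or.inr (Or.inr (Or.inl qm14))))⟩
    · exact ⟨Or.inl qs15, Or.inr (Or.inr (Or.inr (Or.inr (Or.inr (Or.inr (qm15))))))⟩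
    · exact ⟨Or.inr (Or.inl qs16), Or.inr (Or.inr (Or.inr (Or.inr (Or.inr (Or.inr (qm16))))))⟩
    · exact ⟨Or.inl qs20, Or.inr (Or.inr (Or.inl qm20))⟩
    · exact ⟨Or.inl qs21, Or.inr (Or.inr (Or.inr (Or.inr (Or.inl qm21))))⟩
    · exact ⟨Or.inr (Or.inr (Or.inl qs22)), Or.inr (Or.inr (Or.inl qm22))⟩
    · exact ⟨Or.inl qs23, Or.inr (Or.inr (Or.inr (Or.inr (Or.inr (Or.inl qm23)))))⟩
    · exact ⟨Or.inr (Or.inr (Or.inl qs24)), Or.inr (Or.inr (Or.inr (Or.inr (Or.inl qm24))))⟩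
    · exact ⟨Or.inr (Or.inr (Or.inl qs25)), Or.inr (Or.inr (Or.inr (Or.inr (Or.inr (Or.inl qm25)))))⟩
    · exact ⟨Or.inr (Or.inr (Or.inl qs26)), Or.inr (Or.inr (Or.inr (Or.inr (Or.inr (Or.inr (qm26))))))⟩
    · exact ⟨Or.inl qs30, Or.inr (Or.inr (Or.inr (Or.inl qm30)))⟩
    · exact ⟨Or.inl qs31, Or.inr (Or.inr (Or.inr (Or.inr (Or.inr (Or.inr (qm31))))))⟩
    · exact ⟨Or.inl qs32, Or.inr (Or.inr (Or.inr (Or.inr (Or.inr (Or.inl qm32)))))⟩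
    · exact ⟨Or.inr (Or.inr (Or.inr (Or.inl qs33))), Or.inr (Or.inr (Or.inr (Or.inl qm33)))⟩
    · exact ⟨Or.inl qs34, Or.inr (Or.inr (Or.inr (Or.inr (Or.inr (Or.inr (qm34))))))⟩
    · exact ⟨Or.inr (Or.inr (Or.inr (Or.inl qs35))), Or.inr (Or.inr (Or.inr (Or.inr (Or.inr (Or.inl qm35)))))⟩
    · exact ⟨Or.inr (Or.inr (Or.inr (Or.inl qs36))), Or.inr (Or.inr (Or.inr (Or.inr (Or.inr (Or.inr (qm36))))))⟩
    · exact ⟨Or.inl qs40, Or.inr (Or.inr (Or.inr (Or.inr (Or.inl qm40))))⟩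
    · exact ⟨Or.inr (Or.inl qs41), Or.inr (Or.inr (Or.inr (Or.inr (Or.inl qm41))))⟩
    · exact ⟨Or.inr (Or.inr (Or.inl qs42)), Or.inr (Or.inr (Or.inr (Or.inr (Or.inl qm42))))⟩
    · exact ⟨Or.inl qs43, Or.inr (Or.inr (Or.inr (Or.inr (Or.inr (Or.inr (qm43))))))⟩
    · exact ⟨Or.inr (Or.inr (Or.inr (Or.inr (Or.inl qs44)))), Or.inr (Or.inr (Or.inr (Or.inr (Or.inl qm44))))⟩
    · exact ⟨Or.inr (Or.inr (Or.inl qs45)), Or.inr (Or.inr (Or.inr (Or.inr (Or.inr (Or.inr (qm45))))))⟩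
    · exact ⟨Or.inr (Or.inr (Or.inr (Or.inr (Or.inl qs46)))), Or.inr (Or.inr (Or.inr (Or.inr (Or.inr (Or.inr (qm46))))))⟩
    · exact ⟨Or.inl qs50, Or.inr (Or.inr (Or.inr (Or.inr (Or.inr (Or.inl qm50)))))⟩
    · exact ⟨Or.inl qs51, Or.inr (Or.inr (Or.inr (Or.inr (Or.inr (Or.inr (qm51))))))⟩
    · exact ⟨Or.inr (Or.inr (Or.inl qs52)), Or.inr (Or.inr (Or.inr (Or.inr (Or.inr (Or.inl qm52)))))⟩
    · exact ⟨Or.inr (Or.inr (Or.inr (Or.inl qs53))), Or.inr (Or.inr (Or.inr (Or.inr (Or.inr (Or.inl qm53)))))⟩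
    · exact ⟨Or.inr (Or.inr (Or.inl qs54)), Or.inr (Or.inr (Or.inr (Or.inr (Or.inr (Or.inr (qm54))))))⟩
    · exact ⟨Or.inr (Or.inr (Or.inr (Or.inr (Or.inr (Or.inl qs55))))), Or.inr (Or.inr (Or.inr (Or.inr (Or.inr (Or.inl qm55)))))⟩
    · exact ⟨Or.inr (Or.inr (Or.inr (Or.inr (Or.inr (Or.inl qs56))))), Or.inr (Or.inr (Or.inr (Or.inr (Or.inr (Or.inr (qm56))))))⟩
    · exact ⟨Or.inl qs60, Or.inr (Or.inr (Or.inr (Or.inr (Or.inr (Or.inr (qm60))))))⟩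
    · exact ⟨Or.inr (Or.inl qs61), Or.inr (Or.inr (Or.inr (Or.inr (Or.inr (Or.inr (qm61))))))⟩
    · exact ⟨Or.inr (Or.inr (Or.inl qs62)), Or.inr (Or.inr (Or.inr (Or.inr (Or.inr (Or.inr (qm62))))))⟩
    · exact ⟨Or.inr (Or.inr (Or.inr (Or.inl qs63))), Or.inr (Or.inr (Or.inr (Or.inr (Or.inr (Or.inr (qm63))))))⟩
    · exact ⟨Or.inr (Or.inr (Or.inr (Or.inr (Or.inl qs64)))), Or.inr (Or.inr (Or.inr (Or.inr (Or.inr (Or.inr (qm64))))))⟩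
    · exact ⟨Or.inr (Or.inr (Or.inr (Or.inr (Or.inr (Or.inl qs65))))), Or.inr (Or.inr (Or.inr (Or.inr (Or.inr (Or.inr (qm65))))))⟩
    · exact ⟨Or.inr (Or.inr (Or.inr (Or.inr (Or.inr (Or.inr (qs66)))))), Or.inr (Or.inr (Or.inr (Or.inr (Or.inr (Or.inr (qm66))))))⟩

end Aux

/-- In a finite, slim, semimodular lattice, if an element `a` covers three
pairwise distinct elements `x₁, x₂, x₃`, then `{x₁, x₂, x₃}` can be relabeled
as `y₁, y₂, y₃` so that the seven elements
`a, y₁, y₂, y₃, y₁ ⊓ y₂, y₂ ⊓ y₃, y₁ ⊓ y₃` are pairwise distinct, satisfy the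
`S₇` relations, and form a set closed under `⊔` and `⊓`; hence the sublattice
generated by `{x₁, x₂, x₃}` is a copy of `S₇`. -/
theorem slim_semimodular_three_covers_S7 {α : Type*} [Lattice α] [Fintype α]
    (hsm : ∀ a b : α, a ⊓ b ⋖ a → b ⋖ a ⊔ b)
    (hslim : ∃ C₁ C₂ : Set α, IsChain (· ≤ ·) C₁ ∧ IsChain (· ≤ ·) C₂ ∧
      ∀ j : α, JoinIrreducible j → j ∈ C₁ ∪ C₂)
    (a x₁ x₂ x₃ : α) (h1 : x₁ ⋖ a) (h2 : x₂ ⋖ a) (h3 : x₃ ⋖ a)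
    (h12 : x₁ ≠ x₂) (h13 : x₁ ≠ x₃) (h23 : x₂ ≠ x₃) :
    ∃ y₁ y₂ y₃ : α, ({y₁, y₂, y₃} : Set α) = ({x₁, x₂, x₃} : Set α) ∧
      [a, y₁, y₂, y₃, y₁ ⊓ y₂, y₂ ⊓ y₃, y₁ ⊓ y₃].Pairwise (· ≠ ·) ∧
      y₁ ⊔ y₂ = a ∧ y₁ ⊔ y₃ = a ∧ y₂ ⊔ y₃ = a ∧
      (y₁ ⊓ y₂) ⊔ (y₂ ⊓ y₃) = y₂ ∧
      (y₁ ⊓ y₂) ⊔ y₃ = a ∧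
      y₁ ⊔ (y₂ ⊓ y₃) = a ∧
      y₁ ⊓ y₃ = (y₁ ⊓ y₂) ⊓ (y₂ ⊓ y₃) ∧
      (∀ u ∈ ({a, y₁, y₂, y₃, y₁ ⊓ y₂, y₂ ⊓ y₃, y₁ ⊓ y₃} : Set α),
        ∀ w ∈ ({a, y₁, y₂, y₃, y₁ ⊓ y₂, y₂ ⊓ y₃, y₁ ⊓ y₃} : Set α),
          u ⊔ w ∈ ({a, y₁, y₂, y₃, y₁ ⊓ y₂, y₂ ⊓ y₃, y₁ ⊓ y₃} : Set α) ∧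
          u ⊓ w ∈ ({a, y₁, y₂, y₃, y₁ ⊓ y₂, y₂ ⊓ y₃, y₁ ⊓ y₃} : Set α)) := by
  obtain ⟨C₁, C₂, hC₁, hC₂, hcov⟩ := hslim
  have key : ∀ z w : α, (∀ j ∈ C₁, JoinIrreducible j → j ≤ z → j ≤ w) →
      (∀ j ∈ C₂, JoinIrreducible j → j ≤ z → j ≤ w) → z ≤ w := fun z w hA hB =>
    aux_le_of_ji w z (fun j hj hle => (hcov j hj).elim
      (fun hc => hA j hc hj hle) (fun hc => hB j hc hj hle))
  have nle : ∀ u w : α, u ⋖ a → w ⋖ a → u ≠ w → ¬ u ≤ w := by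
    intro u w hu hw hne hle
    exact hu.2 (hle.lt_of_ne hne) hw.lt
  -- `P u w` : the first coordinate of `u` is strictly bigger than that of `w`
  set P : α → α → Prop := fun u w => ¬ ∀ j ∈ C₁, JoinIrreducible j → j ≤ u → j ≤ w with hP
  have tot : ∀ u w : α, u ⋖ a → w ⋖ a → u ≠ w → P u w ∨ P w u := by
    intro u w hu hw hne
    by_cases huw : P u w
    · exact Or.inl huw
    refine Or.inr (fun R1wu => ?_)
    have R1uw : ∀ j ∈ C₁, JoinIrreducible j → j ≤ u → j ≤ w := not_not.mp huw
    have nR2uw : ¬ ∀ j ∈ C₂, JoinIrreducible j → j ≤ u → j ≤ w :=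
      fun hR => nle u w hu hw hne (key u w R1uw hR)
    have nR2wu : ¬ ∀ j ∈ C₂, JoinIrreducible j → j ≤ w → j ≤ u :=
      fun hR => nle w u hw hu hne.symm (key w u R1wu hR)
    exact nR2wu (chain_total hC₂ nR2uw)
  have ptrans : ∀ u w v : α, P u w → P w v → P u v := by
    intro u w v huw hwv huv
    have hvw : ∀ j ∈ C₁, JoinIrreducible j → j ≤ v → j ≤ w := chain_total hC₁ hwv
    exact huw (fun j hc hj hle => hvw j hc hj (huv j hc hj hle))
  by_cases p12 : P x₁ x₂
  · by_cases p23 : P x₂ x₃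
    · exact ⟨x₁, x₂, x₃, rfl,
        core C₁ C₂ hC₁ hC₂ hcov a x₁ x₂ x₃ h1 h2 h3 h12 h13 h23 p12 p23⟩
    · have p32 : P x₃ x₂ := (tot x₂ x₃ h2 h3 h23).resolve_left p23
      by_cases p13 : P x₁ x₃
      · exact ⟨x₁, x₃, x₂, by ext z; simp only [Set.mem_insert_iff, Set.mem_singleton_iff]; tauto,
          core C₁ C₂ hC₁ hC₂ hcov a x₁ x₃ x₂ h1 h3 h2 h13 h12 h23.symm p13 p32⟩
      · have p31 : P x₃ x₁ := (tot x₁ x₃ h1 h3 h13).resolve_left p13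
        exact ⟨x₃, x₁, x₂, by ext z; simp only [Set.mem_insert_iff, Set.mem_singleton_iff]; tauto,
          core C₁ C₂ hC₁ hC₂ hcov a x₃ x₁ x₂ h3 h1 h2 h13.symm h23.symm h12 p31 p12⟩
  · have p21 : P x₂ x₁ := (tot x₁ x₂ h1 h2 h12).resolve_left p12
    by_cases p13 : P x₁ x₃
    · exact ⟨x₂, x₁, x₃, by ext z; simp only [Set.mem_insert_iff, Set.mem_singleton_iff]; tauto,
        core C₁ C₂ hC₁ hC₂ hcov a x₂ x₁ x₃ h2 h1 h3 h12.symm h23 h13 p21 p13⟩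
    · have p31 : P x₃ x₁ := (tot x₁ x₃ h1 h3 h13).resolve_left p13
      by_cases p23 : P x₂ x₃
      · exact ⟨x₂, x₃, x₁, by ext z; simp only [Set.mem_insert_iff, Set.mem_singleton_iff]; tauto,
          core C₁ C₂ hC₁ hC₂ hcov a x₂ x₃ x₁ h2 h3 h1 h23 h12.symm h13.symm p23 p31⟩
      · have p32 : P x₃ x₂ := (tot x₂ x₃ h2 h3 h23).resolve_left p23
        exact ⟨x₃, x₂, x₁, by ext z; simp only [Set.mem_insert_iff, Set.mem_singleton_iff]; tauto,
          core C₁ C₂ hC₁ hC₂ hcov a x₃ x₂ x₁ h3 h2 h1 h23.symm h13.symm h12.symm p32 p21⟩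
end
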